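/- The Möbius function of the shuffle poset satisfies μ(W_{m,n}) = (−1)^{m+n} · binom(m+n, n). -/

import Mathlib

/-- Greene's poset of shuffles `W_{m,n}`: fixing the disjoint words
`x = x₁…x_m` (the letters `Sum.inl i`) and `y = y₁…y_n` (the letters `Sum.inr j`),
an element is a shuffle of a subword of `x` with a subword of `y`, i.e. a duplicate-free
list of letters whose `x`-letters appear in increasing order and whose `y`-letters
appear in increasing order. -/
def ShuffleWord (m n : ℕ) :=
  {w : List (Fin m ⊕ Fin n) //
    w.Nodup ∧ (w.filterMap Sum.getLeft?).Pairwise (· < ·) ∧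
      (w.filterMap Sum.getRight?).Pairwise (· < ·)}

/-- The order on `W_{m,n}`: `v ≤ w` iff `v_x ⊇ w_x` and `v_y ⊆ w_y` as sets, and the
restriction of `v` to the letters of `w` equals the restriction of `w` to the letters
of `v` as words. -/
def ShuffleLE {m n : ℕ} (v w : ShuffleWord m n) : Prop :=
  (∀ a : Fin m, Sum.inl a ∈ w.1 → Sum.inl a ∈ v.1) ∧
  (∀ b : Fin n, Sum.inr b ∈ v.1 → Sum.inr b ∈ w.1) ∧
  v.1.filter (fun c => @decide (c ∈ w.1) (Classical.propDecidable _)) =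
    w.1.filter (fun c => @decide (c ∈ v.1) (Classical.propDecidable _))

/-- The rank function `ρ(w) = (m − |w_x|) + |w_y|` of `W_{m,n}`. -/
def shuffleRank {m n : ℕ} (w : ShuffleWord m n) : ℕ :=
  (m - (w.1.filterMap Sum.getLeft?).length) + (w.1.filterMap Sum.getRight?).length

namespace SP
open List
open scoped Classical

/-- the membership predicate, as a Bool. -/
noncomputable def mp {m n : ℕ} (w : ShuffleWord m n) : Fin m ⊕ Fin n → Bool :=
  fun c => @decide (c ∈ w.1) (Classical.propDecidable _)

theorem mp_eq_true {m n : ℕ} {w : ShuffleWord m n} {c : Fin m ⊕ Fin n} :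
    mp w c = true ↔ c ∈ w.1 := by simp [mp]

theorem mp_eq_false {m n : ℕ} {w : ShuffleWord m n} {c : Fin m ⊕ Fin n} :
    mp w c = false ↔ c ∉ w.1 := by simp [mp]

theorem shuffleLE_def {m n : ℕ} (v w : ShuffleWord m n) :
    ShuffleLE v w ↔
      ((∀ a : Fin m, Sum.inl a ∈ w.1 → Sum.inl a ∈ v.1) ∧
       (∀ b : Fin n, Sum.inr b ∈ v.1 → Sum.inr b ∈ w.1) ∧
       v.1.filter (mp w) = w.1.filter (mp v)) := by
  unfold ShuffleLE mp; exact Iff.rfl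

theorem shuffleLE_refl {m n : ℕ} (v : ShuffleWord m n) : ShuffleLE v v :=
  ⟨fun _ h => h, fun _ h => h, rfl⟩

theorem ext' {m n : ℕ} {v w : ShuffleWord m n} (h : v.1 = w.1) : v = w :=
  Subtype.ext h

theorem shuffleLE_antisymm {m n : ℕ} {v w : ShuffleWord m n}
    (h : ShuffleLE v w) (h' : ShuffleLE w v) : v = w := by
  rw [shuffleLE_def] at h h'
  have hvw : ∀ c ∈ v.1, c ∈ w.1 := by
    rintro (a | b) hc
    · exact h'.1 a hc
    · exact h.2.1 b hc
  have hwv : ∀ c ∈ w.1, c ∈ v.1 := by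
    rintro (a | b) hc
    · exact h.1 a hc
    · exact h'.2.1 b hc
  apply ext'
  have e1 : v.1.filter (mp w) = v.1 :=
    List.filter_eq_self.2 fun a ha => mp_eq_true.2 (hvw a ha)
  have e2 : w.1.filter (mp v) = w.1 :=
    List.filter_eq_self.2 fun a ha => mp_eq_true.2 (hwv a ha)
  rw [← e1, ← e2]; exact h.2.2

theorem shuffleLE_trans {m n : ℕ} {u v w : ShuffleWord m n}
    (huv : ShuffleLE u v) (hvw : ShuffleLE v w) : ShuffleLE u w := by
  rw [shuffleLE_def] at *
  obtain ⟨huv1, huv2, huv3⟩ := huv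
  obtain ⟨hvw1, hvw2, hvw3⟩ := hvw
  refine ⟨fun a ha => huv1 a (hvw1 a ha), fun b hb => hvw2 b (huv2 b hb), ?_⟩
  have key : ∀ c : Fin m ⊕ Fin n, c ∈ u.1 → c ∈ w.1 → c ∈ v.1 := by
    rintro (a | b) hu hw
    · exact hvw1 a hw
    · exact huv2 b hu
  have s1 : u.1.filter (mp w) = u.1.filter (fun c => mp w c && mp v c) := by
    apply (List.filter_congr ?_).symm
    intro c hc
    rcases Classical.em (c ∈ w.1) with hcw | hcw
    · have := key c hc hcw
      simp [mp, hcw, this]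
    · simp [mp, hcw]
  have s6 : w.1.filter (fun c => mp u c && mp v c) = w.1.filter (mp u) := by
    apply List.filter_congr
    intro c hc
    rcases Classical.em (c ∈ u.1) with hcu | hcu
    · have := key c hcu hc
      simp [mp, hcu, this]
    · simp [mp, hcu]
  calc u.1.filter (mp w)
      = u.1.filter (fun c => mp w c && mp v c) := s1
    _ = (u.1.filter (mp v)).filter (mp w) := (List.filter_filter).symm
    _ = (v.1.filter (mp u)).filter (mp w) := by rw [huv3]
    _ = v.1.filter (fun c => mp w c && mp u c) := List.filter_filter
    _ = v.1.filter (fun c => mp u c && mp w c) := by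
        apply List.filter_congr; intro c _; rw [Bool.and_comm]
    _ = (v.1.filter (mp w)).filter (mp u) := (List.filter_filter).symm
    _ = (w.1.filter (mp v)).filter (mp u) := by rw [hvw3]
    _ = w.1.filter (fun c => mp u c && mp v c) := List.filter_filter
    _ = w.1.filter (mp u) := s6


/-- take a subword -/
noncomputable def subw {m n : ℕ} (u : ShuffleWord m n) (p : Fin m ⊕ Fin n → Bool) :
    ShuffleWord m n :=
  ⟨u.1.filter p, u.2.1.filter p,
    (u.2.2.1 : List.Pairwise _ _).sublist ((List.filter_sublist (l := u.1)).filterMap _),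
    (u.2.2.2 : List.Pairwise _ _).sublist ((List.filter_sublist (l := u.1)).filterMap _)⟩

@[simp] theorem subw_val {m n : ℕ} (u : ShuffleWord m n) (p) : (subw u p).1 = u.1.filter p := rfl

theorem mem_subw {m n : ℕ} {u : ShuffleWord m n} {p} {c : Fin m ⊕ Fin n} :
    c ∈ (subw u p).1 ↔ c ∈ u.1 ∧ p c = true := by
  simp [subw, List.mem_filter]

/-- filtering to a subword of itself gives the subword -/
theorem filter_mp_subw {m n : ℕ} (u : ShuffleWord m n) (p) :
    u.1.filter (mp (subw u p)) = u.1.filter p := by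
  apply List.filter_congr
  intro c hc
  rcases Classical.em (p c = true) with h | h
  · have hmem : c ∈ (subw u p).1 := mem_subw.2 ⟨hc, h⟩
    rw [h]; simpa [mp] using hmem
  · have hmem : c ∉ (subw u p).1 := fun hmem => h (mem_subw.1 hmem).2
    have hf : p c = false := by simpa using h
    rw [hf]; simpa [mp] using hmem

theorem subw_filter_self {m n : ℕ} (u : ShuffleWord m n) (p) :
    (subw u p).1.filter (mp u) = (subw u p).1 :=
  List.filter_eq_self.2 fun c hc => mp_eq_true.2 (mem_subw.1 hc).1

theorem le_subw {m n : ℕ} (u : ShuffleWord m n) (p)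
    (h : ∀ b : Fin n, Sum.inr b ∈ u.1 → p (Sum.inr b) = true) :
    ShuffleLE u (subw u p) := by
  rw [shuffleLE_def]
  refine ⟨fun a ha => (mem_subw.1 ha).1, fun b hb => mem_subw.2 ⟨hb, h b hb⟩, ?_⟩
  rw [filter_mp_subw, subw_filter_self]; rfl

theorem subw_le {m n : ℕ} (w : ShuffleWord m n) (p)
    (h : ∀ a : Fin m, Sum.inl a ∈ w.1 → p (Sum.inl a) = true) :
    ShuffleLE (subw w p) w := by
  rw [shuffleLE_def]
  refine ⟨fun a ha => mem_subw.2 ⟨ha, h a ha⟩, fun b hb => (mem_subw.1 hb).1, ?_⟩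
  rw [filter_mp_subw, subw_filter_self]; rfl

/-- lists all of whose entries are `inl` -/
theorem eq_map_inl_of_all_inl {m n : ℕ} :
    ∀ l : List (Fin m ⊕ Fin n), (∀ c ∈ l, ∀ b : Fin n, c ≠ Sum.inr b) →
      l = (l.filterMap Sum.getLeft?).map Sum.inl := by
  intro l
  induction l with
  | nil => intro; rfl
  | cons c t ih =>
    intro h
    rcases c with a | b
    · simpa [List.filterMap_cons, Sum.getLeft?] using ih fun c hc => h c (List.mem_cons_of_mem _ hc)
    · exact absurd rfl (h (Sum.inr b) (List.mem_cons_self) b)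

theorem eq_map_inr_of_all_inr {m n : ℕ} :
    ∀ l : List (Fin m ⊕ Fin n), (∀ c ∈ l, ∀ a : Fin m, c ≠ Sum.inl a) →
      l = (l.filterMap Sum.getRight?).map Sum.inr := by
  intro l
  induction l with
  | nil => intro; rfl
  | cons c t ih =>
    intro h
    rcases c with a | b
    · exact absurd rfl (h (Sum.inl a) (List.mem_cons_self) a)
    · simpa [List.filterMap_cons, Sum.getRight?] using ih fun c hc => h c (List.mem_cons_of_mem _ hc)

/-- a strictly sorted complete list of `Fin k` is `finRange k` -/
theorem sorted_complete_eq_finRange {k : ℕ} (l : List (Fin k))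
    (hs : l.Pairwise (· < ·)) (hc : ∀ a : Fin k, a ∈ l) : l = List.finRange k := by
  have hnd : l.Nodup := hs.nodup
  have hperm : l ~ List.finRange k :=
    (List.perm_ext_iff_of_nodup hnd (List.nodup_finRange k)).2
      fun a => ⟨fun _ => List.mem_finRange a, fun _ => hc a⟩
  exact List.Perm.eq_of_pairwise (fun a b _ _ h1 h2 => absurd (h1.trans h2) (lt_irrefl _)) hs (List.pairwise_lt_finRange k) hperm

noncomputable def xword (m n : ℕ) : ShuffleWord m n :=
  ⟨(List.finRange m).map Sum.inl, by
      exact (List.nodup_finRange m).map (fun a b h => by simpa using h), by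
      have : ((List.finRange m).map (Sum.inl : Fin m → Fin m ⊕ Fin n)).filterMap Sum.getLeft?
          = List.finRange m := by
        rw [List.filterMap_map]
        rw [show Sum.getLeft? ∘ (Sum.inl : Fin m → Fin m ⊕ Fin n) = some from rfl]
        exact List.filterMap_some
      rw [this]; exact List.pairwise_lt_finRange m, by
      have : ((List.finRange m).map (Sum.inl : Fin m → Fin m ⊕ Fin n)).filterMap Sum.getRight?
          = [] := by
        simp [List.filterMap_map, Function.comp, Sum.getRight?]
      rw [this]; exact List.Pairwise.nil⟩

noncomputable def yword (m n : ℕ) : ShuffleWord m n :=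
  ⟨(List.finRange n).map Sum.inr, by
      exact (List.nodup_finRange n).map (fun a b h => by simpa using h), by
      have : ((List.finRange n).map (Sum.inr : Fin n → Fin m ⊕ Fin n)).filterMap Sum.getLeft?
          = [] := by
        simp [List.filterMap_map, Function.comp, Sum.getLeft?]
      rw [this]; exact List.Pairwise.nil, by
      have : ((List.finRange n).map (Sum.inr : Fin n → Fin m ⊕ Fin n)).filterMap Sum.getRight?
          = List.finRange n := by
        rw [List.filterMap_map]
        rw [show Sum.getRight? ∘ (Sum.inr : Fin n → Fin m ⊕ Fin n) = some from rfl]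
        exact List.filterMap_some
      rw [this]; exact List.pairwise_lt_finRange n⟩

@[simp] theorem mem_xword {m n : ℕ} (a : Fin m) : Sum.inl a ∈ (xword m n).1 := by
  simp [xword]

@[simp] theorem not_mem_xword {m n : ℕ} (b : Fin n) : Sum.inr b ∉ (xword m n).1 := by
  simp [xword]

@[simp] theorem mem_yword {m n : ℕ} (b : Fin n) : Sum.inr b ∈ (yword m n).1 := by
  simp [yword]

@[simp] theorem not_mem_yword {m n : ℕ} (a : Fin m) : Sum.inl a ∉ (yword m n).1 := by
  simp [yword]

theorem eq_xword {m n : ℕ} (w : ShuffleWord m n)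
    (hx : ∀ a : Fin m, Sum.inl a ∈ w.1) (hy : ∀ b : Fin n, Sum.inr b ∉ w.1) :
    w = xword m n := by
  apply ext'
  have h1 : w.1 = (w.1.filterMap Sum.getLeft?).map Sum.inl :=
    eq_map_inl_of_all_inl w.1 fun c hc b hb => hy b (hb ▸ hc)
  have h2 : w.1.filterMap Sum.getLeft? = List.finRange m := by
    apply sorted_complete_eq_finRange _ w.2.2.1
    intro a
    exact List.mem_filterMap.2 ⟨Sum.inl a, hx a, rfl⟩
  rw [h1, h2]; rfl

theorem eq_yword {m n : ℕ} (w : ShuffleWord m n)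
    (hy : ∀ b : Fin n, Sum.inr b ∈ w.1) (hx : ∀ a : Fin m, Sum.inl a ∉ w.1) :
    w = yword m n := by
  apply ext'
  have h1 : w.1 = (w.1.filterMap Sum.getRight?).map Sum.inr :=
    eq_map_inr_of_all_inr w.1 fun c hc a ha => hx a (ha ▸ hc)
  have h2 : w.1.filterMap Sum.getRight? = List.finRange n := by
    apply sorted_complete_eq_finRange _ w.2.2.2
    intro b
    exact List.mem_filterMap.2 ⟨Sum.inr b, hy b, rfl⟩
  rw [h1, h2]; rfl


/-! ### projections -/

theorem mem_filterMap_getLeft {m n : ℕ} {l : List (Fin m ⊕ Fin n)} {a : Fin m} :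
    a ∈ l.filterMap Sum.getLeft? ↔ Sum.inl a ∈ l := by
  rw [List.mem_filterMap]
  constructor
  · rintro ⟨c, hc, hc2⟩
    rcases c with a' | b'
    · simp only [Sum.getLeft?] at hc2
      injection hc2 with h; exact h ▸ hc
    · simp [Sum.getLeft?] at hc2
  · intro h; exact ⟨Sum.inl a, h, rfl⟩

theorem mem_filterMap_getRight {m n : ℕ} {l : List (Fin m ⊕ Fin n)} {b : Fin n} :
    b ∈ l.filterMap Sum.getRight? ↔ Sum.inr b ∈ l := by
  rw [List.mem_filterMap]
  constructor
  · rintro ⟨c, hc, hc2⟩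
    rcases c with a' | b'
    · simp [Sum.getRight?] at hc2
    · simp only [Sum.getRight?] at hc2
      injection hc2 with h; exact h ▸ hc
  · intro h; exact ⟨Sum.inr b, h, rfl⟩

/-- reconstruction: a word is determined by its shape and its two projections -/
theorem eq_of_proj {m n : ℕ} :
    ∀ (l l' : List (Fin m ⊕ Fin n)), l.map Sum.isRight = l'.map Sum.isRight →
      l.filterMap Sum.getLeft? = l'.filterMap Sum.getLeft? →
      l.filterMap Sum.getRight? = l'.filterMap Sum.getRight? → l = l' := by
  intro l
  induction l with
  | nil =>
    intro l' h _ _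
    cases l' with
    | nil => rfl
    | cons c t => simp at h
  | cons c t ih =>
    intro l' h hL hR
    cases l' with
    | nil => simp at h
    | cons c' t' =>
      rcases c with a | b <;> rcases c' with a' | b'
      · simp only [List.filterMap_cons, Sum.getLeft?] at hL
        injection hL with h1 hL'
        subst h1
        simp only [List.map_cons] at h
        injection h with _ h'
        simp only [List.filterMap_cons, Sum.getRight?] at hR
        rw [ih t' h' hL' hR]
      · simp [Sum.isRight] at h
      · simp [Sum.isRight] at h
      · simp only [List.filterMap_cons, Sum.getRight?] at hR
        injection hR with h1 hR'
        subst h1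
        simp only [List.map_cons] at h
        injection h with _ h'
        simp only [List.filterMap_cons, Sum.getLeft?] at hL
        rw [ih t' h' hL hR']

theorem countP_finRange {k : ℕ} (p : Fin k → Bool) :
    (List.finRange k).countP p = (Finset.univ.filter (fun i => p i = true)).card := by
  rw [Fin.univ_def]
  simp [Finset.filter, Finset.card, Multiset.filter_coe, List.countP_eq_length_filter]

theorem cnt_mono {k : ℕ} (t : Finset (Fin k)) {i j : Fin k} (hij : i < j) (hi : i ∈ t) :
    (t.filter (· < i)).card < (t.filter (· < j)).card := by
  apply Finset.card_lt_card
  rw [Finset.ssubset_def]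
  constructor
  · intro a ha
    rcases Finset.mem_filter.1 ha with ⟨h1, h2⟩
    exact Finset.mem_filter.2 ⟨h1, lt_trans h2 hij⟩
  · intro hsub
    have h1 : i ∈ t.filter (· < j) := Finset.mem_filter.2 ⟨hi, hij⟩
    have h2 := hsub h1
    rw [Finset.mem_filter] at h2
    exact absurd h2.2 (lt_irrefl i)

section Phi
variable {m n : ℕ} (s : Finset (Fin (m + n))) (hs : s.card = n)

theorem card_compl_s (hs : s.card = n) : sᶜ.card = m := by
  rw [Finset.card_compl, hs, Fintype.card_fin]
  omega

noncomputable def phiFun : Fin (m + n) → Fin m ⊕ Fin n :=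
  fun i =>
    if h : i ∈ s then
      Sum.inr ⟨(s.filter (· < i)).card, by
        have hss : s.filter (· < i) ⊂ s :=
          Finset.filter_ssubset.2 ⟨i, h, lt_irrefl i⟩
        have := Finset.card_lt_card hss
        omega⟩
    else
      Sum.inl ⟨(sᶜ.filter (· < i)).card, by
        have hss : sᶜ.filter (· < i) ⊂ sᶜ :=
          Finset.filter_ssubset.2 ⟨i, Finset.mem_compl.2 h, lt_irrefl i⟩
        have h2 := Finset.card_lt_card hss
        have h3 := card_compl_s s hs
        omega⟩

theorem phiFun_injective : Function.Injective (phiFun s hs) := by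
  have key : ∀ i j : Fin (m + n), i < j → phiFun s hs i ≠ phiFun s hs j := by
    intro i j hij
    unfold phiFun
    rcases Classical.em (i ∈ s) with hi | hi <;> rcases Classical.em (j ∈ s) with hj | hj
    · rw [dif_pos hi, dif_pos hj]
      intro hh
      injection hh with hh
      have := cnt_mono s hij hi
      rw [Fin.mk.injEq] at hh
      omega
    · rw [dif_pos hi, dif_neg hj]; simp
    · rw [dif_neg hi, dif_pos hj]; simp
    · rw [dif_neg hi, dif_neg hj]
      intro hh
      injection hh with hh
      have := cnt_mono sᶜ hij (Finset.mem_compl.2 hi)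
      rw [Fin.mk.injEq] at hh
      omega
  intro i j hij
  rcases lt_trichotomy i j with h | h | h
  · exact absurd hij (key i j h)
  · exact h
  · exact absurd hij.symm (key j i h)

noncomputable def Phi : ShuffleWord m n := by
  refine ⟨(List.finRange (m + n)).map (phiFun s hs), ?_, ?_, ?_⟩
  · exact (List.nodup_finRange _).map (phiFun_injective s hs)
  · rw [List.filterMap_map]
    apply List.Pairwise.filterMap (Sum.getLeft? ∘ phiFun s hs) ?_ (List.pairwise_lt_finRange _)
    intro i j hij a ha a' ha'
    simp only [Function.comp, Option.mem_def] at ha ha'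
    unfold phiFun at ha ha'
    rcases Classical.em (i ∈ s) with hi | hi
    · rw [dif_pos hi] at ha; simp [Sum.getLeft?] at ha
    rcases Classical.em (j ∈ s) with hj | hj
    · rw [dif_pos hj] at ha'; simp [Sum.getLeft?] at ha'
    rw [dif_neg hi] at ha
    rw [dif_neg hj] at ha'
    simp only [Sum.getLeft?, Option.some.injEq] at ha ha'
    rw [← ha, ← ha']
    show ((sᶜ.filter (· < i)).card : ℕ) < (sᶜ.filter (· < j)).card
    exact cnt_mono sᶜ hij (Finset.mem_compl.2 hi)
  · rw [List.filterMap_map]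
    apply List.Pairwise.filterMap (Sum.getRight? ∘ phiFun s hs) ?_ (List.pairwise_lt_finRange _)
    intro i j hij b hb b' hb'
    simp only [Function.comp, Option.mem_def] at hb hb'
    unfold phiFun at hb hb'
    rcases Classical.em (i ∈ s) with hi | hi
    · rcases Classical.em (j ∈ s) with hj | hj
      · rw [dif_pos hi] at hb
        rw [dif_pos hj] at hb'
        simp only [Sum.getRight?, Option.some.injEq] at hb hb'
        rw [← hb, ← hb']
        show ((s.filter (· < i)).card : ℕ) < (s.filter (· < j)).card
        exact cnt_mono s hij hi
      · rw [dif_neg hj] at hb'; simp [Sum.getRight?] at hb'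
    · rw [dif_neg hi] at hb; simp [Sum.getRight?] at hb

theorem isRight_phiFun (i : Fin (m + n)) :
    Sum.isRight (phiFun s hs i) = decide (i ∈ s) := by
  unfold phiFun
  rcases Classical.em (i ∈ s) with hi | hi
  · rw [dif_pos hi]; simp [hi]
  · rw [dif_neg hi]; simp [hi]

theorem Phi_shape :
    (Phi s hs).1.map Sum.isRight
      = (List.finRange (m + n)).map (fun i => decide (i ∈ s)) := by
  show ((List.finRange (m + n)).map (phiFun s hs)).map Sum.isRight = _
  rw [List.map_map]
  apply List.map_congr_left
  intro i _
  exact isRight_phiFun s hs i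

theorem Phi_xlen : ((Phi s hs).1.filterMap Sum.getLeft?).length = m := by
  show ((List.map (phiFun s hs) (List.finRange (m+n))).filterMap Sum.getLeft?).length = m
  rw [List.filterMap_map, List.length_filterMap_eq_countP]
  have : ∀ i : Fin (m+n), ((Sum.getLeft? ∘ phiFun s hs) i).isSome = decide (i ∈ sᶜ) := by
    intro i
    unfold phiFun
    simp only [Function.comp]
    rcases Classical.em (i ∈ s) with hi | hi
    · rw [dif_pos hi]; simp [Sum.getLeft?, hi]
    · rw [dif_neg hi]; simp [Sum.getLeft?, hi]
  rw [List.countP_congr (fun i _ => by rw [this i])]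
  rw [countP_finRange]
  have : (Finset.univ.filter (fun i : Fin (m+n) => decide (i ∈ sᶜ) = true)) = sᶜ := by
    rw [← Finset.filter_univ_mem sᶜ]
    apply Finset.filter_congr
    intro i _
    simp
  rw [this, card_compl_s s hs]

theorem Phi_ylen : ((Phi s hs).1.filterMap Sum.getRight?).length = n := by
  show ((List.map (phiFun s hs) (List.finRange (m+n))).filterMap Sum.getRight?).length = n
  rw [List.filterMap_map, List.length_filterMap_eq_countP]
  have : ∀ i : Fin (m+n), ((Sum.getRight? ∘ phiFun s hs) i).isSome = decide (i ∈ s) := by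
    intro i
    unfold phiFun
    simp only [Function.comp]
    rcases Classical.em (i ∈ s) with hi | hi
    · rw [dif_pos hi]; simp [Sum.getRight?, hi]
    · rw [dif_neg hi]; simp [Sum.getRight?, hi]
  rw [List.countP_congr (fun i _ => by rw [this i])]
  rw [countP_finRange]
  have : (Finset.univ.filter (fun i : Fin (m+n) => decide (i ∈ s) = true)) = s := by
    rw [← Finset.filter_univ_mem s]
    apply Finset.filter_congr
    intro i _
    simp
  rw [this, hs]

/-- a nodup list of `Fin k` of length `k` contains everything -/
theorem nodup_len_complete {k : ℕ} (l : List (Fin k)) (hnd : l.Nodup)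
    (hlen : l.length = k) (a : Fin k) : a ∈ l := by
  have h1 : l.toFinset = Finset.univ :=
    Finset.eq_univ_of_card _ (by rw [List.toFinset_card_of_nodup hnd, hlen, Fintype.card_fin])
  rw [← List.mem_toFinset, h1]
  exact Finset.mem_univ a

theorem Phi_fullX (a : Fin m) : Sum.inl a ∈ (Phi s hs).1 := by
  rw [← mem_filterMap_getLeft]
  apply nodup_len_complete _ ((Phi s hs).2.2.1.nodup) (Phi_xlen s hs)

theorem Phi_fullY (b : Fin n) : Sum.inr b ∈ (Phi s hs).1 := by
  rw [← mem_filterMap_getRight]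
  apply nodup_len_complete _ ((Phi s hs).2.2.2.nodup) (Phi_ylen s hs)

end Phi


/-- classical filter over all shuffle words -/
noncomputable def fset {m n : ℕ} [Fintype (ShuffleWord m n)]
    (P : ShuffleWord m n → Prop) : Finset (ShuffleWord m n) :=
  @Finset.filter _ P (fun _ => Classical.propDecidable _) Finset.univ

theorem mem_fset {m n : ℕ} [Fintype (ShuffleWord m n)] {P : ShuffleWord m n → Prop}
    {u : ShuffleWord m n} : u ∈ fset P ↔ P u := by
  rw [fset, Finset.mem_filter]
  exact ⟨fun h => h.2, fun h => ⟨Finset.mem_univ u, h⟩⟩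

section Complete
variable {m n : ℕ}

/-- a word splits into its two projections in length -/
theorem len_split : ∀ l : List (Fin m ⊕ Fin n),
    l.length = (l.filterMap Sum.getLeft?).length + (l.filterMap Sum.getRight?).length := by
  intro l
  induction l with
  | nil => rfl
  | cons c t ih =>
    rcases c with a | b
    · simp only [List.filterMap_cons, Sum.getLeft?, Sum.getRight?, List.length_cons, ih]
      omega
    · simp only [List.filterMap_cons, Sum.getLeft?, Sum.getRight?, List.length_cons, ih]
      omega

theorem proj_left_eq_finRange (u : ShuffleWord m n) (hx : ∀ a : Fin m, Sum.inl a ∈ u.1) :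
    u.1.filterMap Sum.getLeft? = List.finRange m :=
  sorted_complete_eq_finRange _ u.2.2.1 fun a => mem_filterMap_getLeft.2 (hx a)

theorem proj_right_eq_finRange (u : ShuffleWord m n) (hy : ∀ b : Fin n, Sum.inr b ∈ u.1) :
    u.1.filterMap Sum.getRight? = List.finRange n :=
  sorted_complete_eq_finRange _ u.2.2.2 fun b => mem_filterMap_getRight.2 (hy b)

theorem complete_length (u : ShuffleWord m n) (hx : ∀ a : Fin m, Sum.inl a ∈ u.1)
    (hy : ∀ b : Fin n, Sum.inr b ∈ u.1) : u.1.length = m + n := by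
  rw [len_split u.1, proj_left_eq_finRange u hx, proj_right_eq_finRange u hy,
    List.length_finRange, List.length_finRange]

theorem ylen_eq_countP (l : List (Fin m ⊕ Fin n)) :
    (l.filterMap Sum.getRight?).length = l.countP Sum.isRight := by
  rw [List.length_filterMap_eq_countP]
  apply List.countP_congr
  rintro (a | b) _ <;> simp [Sum.getRight?]

/-- every complete word comes from `Phi` -/
theorem complete_eq_Phi (u : ShuffleWord m n) (hx : ∀ a : Fin m, Sum.inl a ∈ u.1)
    (hy : ∀ b : Fin n, Sum.inr b ∈ u.1) :
    ∃ (s : Finset (Fin (m + n))) (hs : s.card = n), u = Phi s hs := by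
  have hlen : u.1.length = m + n := complete_length u hx hy
  set f : Fin (m + n) → Fin m ⊕ Fin n :=
    fun i => u.1[(Fin.cast hlen.symm i : Fin u.1.length)] with hf
  have hu : u.1 = List.ofFn f := by
    conv_lhs => rw [← List.ofFn_getElem (xs := u.1)]
    rw [List.ofFn_congr hlen]
    rfl
  set s : Finset (Fin (m + n)) :=
    Finset.univ.filter (fun i => Sum.isRight (f i) = true) with hsdef
  have hcard : s.card = n := by
    have h1 : s.card = (List.finRange (m + n)).countP (fun i => Sum.isRight (f i)) := by
      rw [countP_finRange]
    have h2 : (List.finRange (m + n)).countP (fun i => Sum.isRight (f i))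
        = u.1.countP Sum.isRight := by
      rw [hu, List.ofFn_eq_map, List.countP_map]
      rfl
    have h3 : u.1.countP Sum.isRight = n := by
      rw [← ylen_eq_countP, proj_right_eq_finRange u hy, List.length_finRange]
    omega
  refine ⟨s, hcard, ?_⟩
  apply ext'
  apply eq_of_proj
  · rw [Phi_shape s hcard, hu, List.map_ofFn, List.ofFn_eq_map]
    apply List.map_congr_left
    intro i _
    show Sum.isRight (f i) = decide (i ∈ s)
    rcases hmem : Sum.isRight (f i) with _ | _
    · have : i ∉ s := by simp [hsdef, hmem]
      simp [this]
    · have : i ∈ s := by simp [hsdef, hmem]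
      simp [this]
  · rw [proj_left_eq_finRange u hx,
      proj_left_eq_finRange (Phi s hcard) (Phi_fullX s hcard)]
  · rw [proj_right_eq_finRange u hy,
      proj_right_eq_finRange (Phi s hcard) (Phi_fullY s hcard)]

theorem card_complete [Fintype (ShuffleWord m n)] :
    (fset (fun u : ShuffleWord m n =>
        (∀ a : Fin m, Sum.inl a ∈ u.1) ∧ (∀ b : Fin n, Sum.inr b ∈ u.1))).card
      = (m + n).choose n := by
  have := Finset.card_bij
    (t := fset (fun u : ShuffleWord m n =>
        (∀ a : Fin m, Sum.inl a ∈ u.1) ∧ (∀ b : Fin n, Sum.inr b ∈ u.1)))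
    (fun (s : Finset (Fin (m + n))) (hs : s ∈ Finset.powersetCard n Finset.univ) =>
      Phi s (Finset.mem_powersetCard_univ.1 hs))
    (fun s hs => by
      refine mem_fset.2 ⟨?_, ?_⟩
      · exact Phi_fullX s _
      · exact Phi_fullY s _)
    (fun s₁ hs₁ s₂ hs₂ heq => by
      have hsh := congrArg (fun u : ShuffleWord m n => u.1.map Sum.isRight) heq
      simp only [Phi_shape] at hsh
      have := List.map_inj_left.1 hsh
      ext i
      have h2 := this i (List.mem_finRange i)
      constructor
      · intro hi
        by_contra hni
        simp [hi, hni] at h2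
      · intro hi
        by_contra hni
        simp [hi, hni] at h2)
    (fun u hu => by
      rcases mem_fset.1 hu with ⟨hx, hy⟩
      rcases complete_eq_Phi u hx hy with ⟨s, hs, hPhi⟩
      exact ⟨s, Finset.mem_powersetCard_univ.2 hs, hPhi.symm⟩)
  rw [← this, Finset.card_powersetCard, Finset.card_univ, Fintype.card_fin]

end Complete


section Core
variable {m n : ℕ}

/-- set of x-letters -/
noncomputable def xset (v : ShuffleWord m n) : Finset (Fin m) :=
  @Finset.filter _ (fun a => Sum.inl a ∈ v.1) (fun _ => Classical.propDecidable _) Finset.univ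

theorem mem_xset {v : ShuffleWord m n} {a : Fin m} : a ∈ xset v ↔ Sum.inl a ∈ v.1 := by
  rw [xset, @Finset.mem_filter _ _ (fun _ => Classical.propDecidable _)]
  exact ⟨fun h => h.2, fun h => ⟨Finset.mem_univ a, h⟩⟩

/-- set of y-letters -/
noncomputable def yset (v : ShuffleWord m n) : Finset (Fin n) :=
  @Finset.filter _ (fun b => Sum.inr b ∈ v.1) (fun _ => Classical.propDecidable _) Finset.univ

theorem mem_yset {v : ShuffleWord m n} {b : Fin n} : b ∈ yset v ↔ Sum.inr b ∈ v.1 := by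
  rw [yset, @Finset.mem_filter _ _ (fun _ => Classical.propDecidable _)]
  exact ⟨fun h => h.2, fun h => ⟨Finset.mem_univ b, h⟩⟩

theorem xlen_eq (v : ShuffleWord m n) :
    (v.1.filterMap Sum.getLeft?).length = (xset v).card := by
  have hnd : (v.1.filterMap Sum.getLeft?).Nodup := v.2.2.1.nodup
  rw [← List.toFinset_card_of_nodup hnd]
  congr 1
  ext a
  rw [List.mem_toFinset, mem_filterMap_getLeft, mem_xset]

theorem ylen_eq (v : ShuffleWord m n) :
    (v.1.filterMap Sum.getRight?).length = (yset v).card := by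
  have hnd : (v.1.filterMap Sum.getRight?).Nodup := v.2.2.2.nodup
  rw [← List.toFinset_card_of_nodup hnd]
  congr 1
  ext b
  rw [List.mem_toFinset, mem_filterMap_getRight, mem_yset]

theorem rank_eq (v : ShuffleWord m n) :
    shuffleRank v = (m - (xset v).card) + (yset v).card := by
  rw [shuffleRank, xlen_eq, ylen_eq]

/-- the condition on `u` in the definition of `F` -/
def Fcond (u v : ShuffleWord m n) : Prop :=
  ShuffleLE u v ∧ (∀ a : Fin m, Sum.inl a ∈ u.1) ∧
    (∀ b : Fin n, Sum.inr b ∈ v.1 → Sum.inr b ∈ u.1)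

/-- the explicit candidate Möbius values -/
noncomputable def F [Fintype (ShuffleWord m n)] (v : ShuffleWord m n) : ℤ :=
  (-1) ^ shuffleRank v * ((fset (fun u => Fcond u v)).card : ℤ)

/-- membership predicate for the common letters `w_x ∪ u_y` -/
noncomputable def kp (w u : ShuffleWord m n) : Fin m ⊕ Fin n → Bool := fun c =>
  match c with
  | Sum.inl _ => mp w c
  | Sum.inr _ => mp u c

/-- the residual condition on `u` -/
def Ru (w u : ShuffleWord m n) : Prop :=
  (∀ a : Fin m, Sum.inl a ∈ u.1) ∧ (∀ b : Fin n, Sum.inr b ∈ u.1 → Sum.inr b ∈ w.1) ∧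
    u.1.filter (kp w u) = w.1.filter (kp w u)

noncomputable def px (S : Finset (Fin m)) : Fin m ⊕ Fin n → Bool := fun c =>
  match c with
  | Sum.inl a => decide (a ∈ S)
  | Sum.inr _ => true

noncomputable def py (B : Finset (Fin n)) : Fin m ⊕ Fin n → Bool := fun c =>
  match c with
  | Sum.inl _ => true
  | Sum.inr b => decide (b ∈ B)

theorem letters_mem_of_Fcond {u v : ShuffleWord m n} (h : Fcond u v) :
    ∀ c ∈ v.1, c ∈ u.1 := by
  rintro (a | b) hc
  · exact h.2.1 a
  · exact h.2.2 b hc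

theorem val_eq_filter_of_le {u v : ShuffleWord m n} (h : ShuffleLE u v)
    (hsub : ∀ c ∈ v.1, c ∈ u.1) : v.1 = u.1.filter (mp v) := by
  have h1 : v.1.filter (mp u) = v.1 :=
    List.filter_eq_self.2 fun c hc => mp_eq_true.2 (hsub c hc)
  have h2 : u.1.filter (mp v) = v.1.filter (mp u) := h.2.2
  rw [h2, h1]

/-- counting subsets above a fixed set, with signs -/
theorem sum_superset_sign (X : Finset (Fin m)) (e : ℕ) :
    (∑ S ∈ Finset.univ.filter (fun S : Finset (Fin m) => X ⊆ S),
      (-1 : ℤ) ^ ((m - S.card) + e))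
    = if X = Finset.univ then (-1 : ℤ) ^ e else 0 := by
  have step : (∑ S ∈ Finset.univ.filter (fun S : Finset (Fin m) => X ⊆ S),
      (-1 : ℤ) ^ ((m - S.card) + e))
      = ∑ T ∈ Xᶜ.powerset, (-1 : ℤ) ^ (T.card + e) := by
    apply Finset.sum_nbij' (fun S => Sᶜ) (fun T => Tᶜ)
    · intro S hS
      rw [Finset.mem_powerset]
      rw [Finset.mem_filter] at hS
      exact Finset.compl_subset_compl.2 hS.2
    · intro T hT
      rw [Finset.mem_powerset] at hT
      rw [Finset.mem_filter]
      refine ⟨Finset.mem_univ _, ?_⟩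
      intro a ha
      rw [Finset.mem_compl]
      intro hmem
      exact absurd ha (Finset.mem_compl.1 (hT hmem))
    · intro S _; exact compl_compl S
    · intro T _; exact compl_compl T
    · intro S _
      congr 1
      have : Sᶜ.card = m - S.card := by
        rw [Finset.card_compl, Fintype.card_fin]
      omega
  rw [step]
  have split : ∀ T ∈ Xᶜ.powerset, (-1 : ℤ) ^ (T.card + e)
      = (-1 : ℤ) ^ T.card * (-1 : ℤ) ^ e := fun T _ => pow_add _ _ _
  rw [Finset.sum_congr rfl split, ← Finset.sum_mul, Finset.sum_powerset_neg_one_pow_card]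
  by_cases hX : X = Finset.univ
  · rw [if_pos hX, if_pos, one_mul]
    rw [hX]
    exact Finset.compl_univ
  · rw [if_neg hX, if_neg, zero_mul]
    rw [Finset.compl_eq_empty_iff]
    exact hX

end Core


section Inner
variable {m n : ℕ}

theorem ru_of_mem {w u v : ShuffleWord m n} (hvw : ShuffleLE v w) (hc : Fcond u v) :
    Ru w u := by
  obtain ⟨huv, hfull, hyv⟩ := hc
  refine ⟨hfull, fun b hb => hvw.2.1 b (huv.2.1 b hb), ?_⟩
  have hsub : ∀ c ∈ v.1, c ∈ u.1 := letters_mem_of_Fcond ⟨huv, hfull, hyv⟩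
  have hv : v.1 = u.1.filter (mp v) := val_eq_filter_of_le huv hsub
  have e1 : u.1.filter (kp w u) = v.1.filter (mp w) := by
    rw [hv, List.filter_filter]
    apply List.filter_congr
    intro c hcu
    rcases c with a | b
    · rcases Classical.em (Sum.inl a ∈ w.1) with h | h
      · have h2 : Sum.inl a ∈ v.1 := hvw.1 a h
        simp [kp, mp, h, h2]
      · simp [kp, mp, h]
    · have h1 : Sum.inr b ∈ v.1 := huv.2.1 b hcu
      have h2 : Sum.inr b ∈ w.1 := hvw.2.1 b h1
      simp [kp, mp, h1, h2, hcu]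
  have e2 : w.1.filter (kp w u) = w.1.filter (mp v) := by
    apply List.filter_congr
    intro c hcw
    rcases c with a | b
    · have h2 : Sum.inl a ∈ v.1 := hvw.1 a hcw
      simp [kp, mp, hcw, h2]
    · show mp u (Sum.inr b) = mp v (Sum.inr b)
      have : Sum.inr b ∈ u.1 ↔ Sum.inr b ∈ v.1 := ⟨fun h => huv.2.1 b h, fun h => hyv b h⟩
      exact decide_eq_decide.2 this
  have e3 : v.1.filter (mp w) = w.1.filter (mp v) := hvw.2.2
  rw [e1, e3, ← e2]

theorem mem_A_of {w u : ShuffleWord m n} (hru : Ru w u) {S : Finset (Fin m)}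
    (hS : xset w ⊆ S) :
    ShuffleLE (subw u (px S)) w ∧ Fcond u (subw u (px S)) := by
  obtain ⟨hfull, hyw, hkp⟩ := hru
  have hle : ShuffleLE u (subw u (px S)) := le_subw u _ (fun b _ => rfl)
  have hcond : Fcond u (subw u (px S)) := ⟨hle, hfull, fun b hb => (mem_subw.1 hb).1⟩
  refine ⟨⟨?_, ?_, ?_⟩, hcond⟩
  · intro a ha
    exact mem_subw.2 ⟨hfull a, by simp [px, hS (mem_xset.2 ha)]⟩
  · intro b hb
    exact hyw b (mem_subw.1 hb).1
  · have hA : (subw u (px S)).1.filter (mp w) = u.1.filter (kp w u) := by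
      show (u.1.filter (px S)).filter (mp w) = _
      rw [List.filter_filter]
      apply List.filter_congr
      intro c hc
      rcases c with a | b
      · rcases Classical.em (Sum.inl a ∈ w.1) with h | h
        · have h2 : a ∈ S := hS (mem_xset.2 h)
          simp [kp, px, mp, h, h2]
        · simp [kp, px, mp, h]
      · have h1 : Sum.inr b ∈ w.1 := hyw b hc
        simp [kp, px, mp, h1, hc]
    have hB : w.1.filter (kp w u) = w.1.filter (mp (subw u (px S))) := by
      apply List.filter_congr
      intro c hc
      rcases c with a | b
      · have h1 : Sum.inl a ∈ (subw u (px S)).1 :=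
          mem_subw.2 ⟨hfull a, by simp [px, hS (mem_xset.2 hc)]⟩
        simp only [kp]
        show mp w (Sum.inl a) = mp (subw u (px S)) (Sum.inl a)
        have : mp w (Sum.inl a) = true := mp_eq_true.2 hc
        have h2 : mp (subw u (px S)) (Sum.inl a) = true := mp_eq_true.2 h1
        rw [this, h2]
      · show mp u (Sum.inr b) = mp (subw u (px S)) (Sum.inr b)
        have h1 : Sum.inr b ∈ (subw u (px S)).1 ↔ Sum.inr b ∈ u.1 := by
          rw [mem_subw]
          simp [px]
        exact decide_eq_decide.2 h1.symm
    show (subw u (px S)).1.filter (mp w) = w.1.filter (mp (subw u (px S)))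
    rw [hA, hkp, hB]

theorem xset_subw_px {u : ShuffleWord m n} (hfull : ∀ a : Fin m, Sum.inl a ∈ u.1)
    (S : Finset (Fin m)) : xset (subw u (px S)) = S := by
  ext a
  rw [mem_xset, mem_subw]
  simp [px, hfull a]

theorem subw_px_xset {w u v : ShuffleWord m n} (hvw : ShuffleLE v w) (hc : Fcond u v) :
    subw u (px (xset v)) = v := by
  apply ext'
  show u.1.filter (px (xset v)) = v.1
  have hsub := letters_mem_of_Fcond hc
  have hv : v.1 = u.1.filter (mp v) := val_eq_filter_of_le hc.1 hsub
  rw [hv]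
  apply List.filter_congr
  intro c hc'
  rcases c with a | b
  · show decide (a ∈ xset v) = mp v (Sum.inl a)
    exact decide_eq_decide.2 mem_xset
  · have h1 : Sum.inr b ∈ v.1 := hc.1.2.1 b hc'
    simp [px, mp, h1]

theorem yset_eq_of_Fcond {u v : ShuffleWord m n} (hc : Fcond u v) : yset v = yset u := by
  ext b
  rw [mem_yset, mem_yset]
  exact ⟨fun h => hc.2.2 b h, fun h => hc.1.2.1 b h⟩

theorem inner_sum [Fintype (ShuffleWord m n)] (w u : ShuffleWord m n) :
    (∑ v ∈ fset (fun v => ShuffleLE v w ∧ Fcond u v), (-1 : ℤ) ^ shuffleRank v)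
      = if Ru w u then
          (if xset w = Finset.univ then (-1 : ℤ) ^ (yset u).card else 0)
        else 0 := by
  rcases Classical.em (Ru w u) with hru | hru
  · rw [if_pos hru, ← sum_superset_sign (xset w) (yset u).card]
    apply Finset.sum_nbij' (fun v => xset v) (fun S => subw u (px S))
    · intro v hv
      rcases mem_fset.1 hv with ⟨hvw, _⟩
      rw [Finset.mem_filter]
      exact ⟨Finset.mem_univ _, fun a ha => mem_xset.2 (hvw.1 a (mem_xset.1 ha))⟩
    · intro S hS
      rw [Finset.mem_filter] at hS
      exact mem_fset.2 (mem_A_of hru hS.2)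
    · intro v hv
      rcases mem_fset.1 hv with ⟨hvw, hc⟩
      exact subw_px_xset hvw hc
    · intro S hS
      exact xset_subw_px hru.1 S
    · intro v hv
      rcases mem_fset.1 hv with ⟨_, hc⟩
      rw [rank_eq, yset_eq_of_Fcond hc]
  · rw [if_neg hru]
    have hempty : fset (fun v => ShuffleLE v w ∧ Fcond u v) = ∅ := by
      apply Finset.eq_empty_of_forall_notMem
      intro v hv
      rcases mem_fset.1 hv with ⟨hvw, hc⟩
      exact hru (ru_of_mem hvw hc)
    rw [hempty, Finset.sum_empty]

theorem ru_subw_py {w : ShuffleWord m n} (hwx : ∀ a : Fin m, Sum.inl a ∈ w.1)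
    {B : Finset (Fin n)} (hB : B ⊆ yset w) : Ru w (subw w (py B)) := by
  refine ⟨?_, ?_, ?_⟩
  · intro a
    exact mem_subw.2 ⟨hwx a, rfl⟩
  · intro b hb
    exact (mem_subw.1 hb).1
  · show (w.1.filter (py B)).filter (kp w (subw w (py B))) = _
    rw [List.filter_filter]
    apply List.filter_congr
    intro c hc
    rcases c with a | b
    · simp [kp, py, mp, hc]
    · show (mp (subw w (py B)) (Sum.inr b) && py (m := m) B (Sum.inr b))
        = mp (subw w (py B)) (Sum.inr b)
      have h1 : mp (subw w (py B)) (Sum.inr b) = py (m := m) B (Sum.inr b) := by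
        rcases hpy : py (m := m) B (Sum.inr b) with _ | _
        · have : Sum.inr b ∉ (subw w (py B)).1 := fun hmem => by
            have := (mem_subw.1 hmem).2
            rw [hpy] at this
            exact Bool.false_ne_true this
          simpa [mp] using this
        · have : Sum.inr b ∈ (subw w (py B)).1 := mem_subw.2 ⟨hc, hpy⟩
          simpa [mp] using this
      rw [h1, Bool.and_self]

theorem yset_subw_py {w : ShuffleWord m n} {B : Finset (Fin n)} (hB : B ⊆ yset w) :
    yset (subw w (py B)) = B := by
  ext b
  rw [mem_yset, mem_subw]
  constructor
  · rintro ⟨-, h2⟩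
    simpa [py] using h2
  · intro hb
    exact ⟨mem_yset.1 (hB hb), by simp [py, hb]⟩

theorem subw_py_yset {w u : ShuffleWord m n} (hwx : ∀ a : Fin m, Sum.inl a ∈ w.1)
    (hru : Ru w u) : subw w (py (yset u)) = u := by
  obtain ⟨hfull, hyw, hkp⟩ := hru
  apply ext'
  show w.1.filter (py (yset u)) = u.1
  have e1 : u.1.filter (kp w u) = u.1 := by
    apply List.filter_eq_self.2
    rintro (a | b) hc
    · exact mp_eq_true.2 (hwx a)
    · exact mp_eq_true.2 hc
  have e2 : w.1.filter (kp w u) = w.1.filter (py (yset u)) := by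
    apply List.filter_congr
    intro c hc
    rcases c with a | b
    · simp [kp, py, mp, hc]
    · show mp u (Sum.inr b) = decide (b ∈ yset u)
      exact decide_eq_decide.2 mem_yset.symm
  rw [← e2, ← hkp, e1]

theorem sum_Ru [Fintype (ShuffleWord m n)] (w : ShuffleWord m n)
    (hwx : ∀ a : Fin m, Sum.inl a ∈ w.1) :
    (∑ u ∈ fset (fun u => Ru w u), (-1 : ℤ) ^ (yset u).card)
      = if yset w = ∅ then 1 else 0 := by
  rw [← Finset.sum_powerset_neg_one_pow_card (x := yset w)]
  apply Finset.sum_nbij' (fun u => yset u) (fun B => subw w (py B))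
  · intro u hu
    rw [Finset.mem_powerset]
    intro b hb
    exact mem_yset.2 ((mem_fset.1 hu).2.1 b (mem_yset.1 hb))
  · intro B hB
    exact mem_fset.2 (ru_subw_py hwx (Finset.mem_powerset.1 hB))
  · intro u hu
    exact subw_py_yset hwx (mem_fset.1 hu)
  · intro B hB
    exact yset_subw_py (Finset.mem_powerset.1 hB)
  · intro u _
    rfl

/-- The key identity: summing `F` over a lower interval gives a delta. -/
theorem star [Fintype (ShuffleWord m n)] (w : ShuffleWord m n) :
    (∑ v ∈ fset (fun v => ShuffleLE v w), F v)
      = @ite _ ((∀ a : Fin m, Sum.inl a ∈ w.1) ∧ (∀ b : Fin n, Sum.inr b ∉ w.1))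
          (Classical.propDecidable _) (1 : ℤ) 0 := by
  have e1 : ∀ v : ShuffleWord m n,
      F v = ∑ _u ∈ fset (fun u => Fcond u v), (-1 : ℤ) ^ shuffleRank v := by
    intro v
    rw [F, Finset.sum_const, nsmul_eq_mul, mul_comm]
  have e2 : (∑ v ∈ fset (fun v => ShuffleLE v w), F v)
      = ∑ v ∈ Finset.univ, ∑ u ∈ Finset.univ,
          (if ShuffleLE v w ∧ Fcond u v then (-1 : ℤ) ^ shuffleRank v else 0) := by
    rw [fset, Finset.sum_filter]
    apply Finset.sum_congr rfl
    intro v _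
    rcases Classical.em (ShuffleLE v w) with h | h
    · rw [if_pos h, e1 v, fset, Finset.sum_filter]
      apply Finset.sum_congr rfl
      intro u _
      rcases Classical.em (Fcond u v) with h2 | h2
      · rw [if_pos h2, if_pos ⟨h, h2⟩]
      · rw [if_neg h2, if_neg (fun hh => h2 hh.2)]
    · rw [if_neg h, eq_comm]
      apply Finset.sum_eq_zero
      intro u _
      rw [if_neg (fun hh => h hh.1)]
  have e3 : ∀ u : ShuffleWord m n,
      (∑ v ∈ Finset.univ, (if ShuffleLE v w ∧ Fcond u v then (-1 : ℤ) ^ shuffleRank v else 0))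
        = ∑ v ∈ fset (fun v => ShuffleLE v w ∧ Fcond u v), (-1 : ℤ) ^ shuffleRank v := by
    intro u
    rw [fset, Finset.sum_filter]
    apply Finset.sum_congr rfl
    intro v _
    rcases Classical.em (ShuffleLE v w ∧ Fcond u v) with h | h
    · rw [if_pos h, if_pos h]
    · rw [if_neg h, if_neg h]
  rw [e2, Finset.sum_comm]
  have e4 : ∀ u : ShuffleWord m n,
      (∑ v ∈ Finset.univ, (if ShuffleLE v w ∧ Fcond u v then (-1 : ℤ) ^ shuffleRank v else 0))
        = if Ru w u then
            (if xset w = Finset.univ then (-1 : ℤ) ^ (yset u).card else 0)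
          else 0 := by
    intro u
    rw [e3 u, inner_sum w u]
  rw [Finset.sum_congr rfl (fun u _ => e4 u)]
  rcases Classical.em (xset w = Finset.univ) with hx | hx
  · have hwx : ∀ a : Fin m, Sum.inl a ∈ w.1 := by
      intro a
      exact mem_xset.1 (hx ▸ Finset.mem_univ a)
    have e5 : (∑ u ∈ Finset.univ, (if Ru w u then
        (if xset w = Finset.univ then (-1 : ℤ) ^ (yset u).card else 0) else 0))
        = ∑ u ∈ fset (fun u => Ru w u), (-1 : ℤ) ^ (yset u).card := by
      rw [fset, Finset.sum_filter]
      apply Finset.sum_congr rfl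
      intro u _
      rw [if_pos hx]
    rw [e5, sum_Ru w hwx]
    rcases Classical.em (yset w = ∅) with hy | hy
    · rw [if_pos hy, if_pos]
      refine ⟨hwx, fun b hb => ?_⟩
      have : b ∈ yset w := mem_yset.2 hb
      rw [hy] at this
      exact absurd this (Finset.notMem_empty b)
    · rw [if_neg hy, if_neg]
      intro hh
      apply hy
      apply Finset.eq_empty_of_forall_notMem
      intro b hb
      exact hh.2 b (mem_yset.1 hb)
  · have e6 : (∑ u ∈ Finset.univ, (if Ru w u then
        (if xset w = Finset.univ then (-1 : ℤ) ^ (yset u).card else 0) else 0)) = 0 := by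
      apply Finset.sum_eq_zero
      intro u _
      rw [if_neg hx]
      rw [ite_self]
    rw [e6, if_neg]
    intro hh
    apply hx
    apply Finset.eq_univ_of_forall
    intro a
    exact mem_xset.2 (hh.1 a)

end Inner


section Main
variable {m n : ℕ}

theorem yword_rank : shuffleRank (yword m n) = m + n := by
  rw [shuffleRank]
  have h1 : ((yword m n).1.filterMap Sum.getLeft?) = ([] : List (Fin m)) := by
    show ((List.finRange n).map Sum.inr).filterMap Sum.getLeft? = _
    rw [List.filterMap_map]
    simp [Function.comp, Sum.getLeft?]
  have h2 : ((yword m n).1.filterMap Sum.getRight?) = List.finRange n := by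
    show ((List.finRange n).map Sum.inr).filterMap Sum.getRight? = _
    rw [List.filterMap_map,
      show Sum.getRight? ∘ (Sum.inr : Fin n → Fin m ⊕ Fin n) = some from rfl,
      List.filterMap_some]
  rw [h1, h2, List.length_nil, List.length_finRange]
  omega

theorem main_aux [Fintype (ShuffleWord m n)]
    (mu : ShuffleWord m n → ShuffleWord m n → ℤ)
    (hmu : ∀ a b : ShuffleWord m n, ShuffleLE a b →
      (∑ c ∈ Finset.univ.filter (fun c => ShuffleLE a c ∧ ShuffleLE c b), mu a c) =
        if a = b then 1 else 0)
    (bot top : ShuffleWord m n)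
    (hbot : ∀ w : ShuffleWord m n, ShuffleLE bot w)
    (htop : ∀ w : ShuffleWord m n, ShuffleLE w top) :
    mu bot top = (-1) ^ (m + n) * ((m + n).choose n : ℤ) := by
  -- identify bot and top
  have hbotx : bot = xword m n := by
    apply eq_xword
    · intro a
      exact (hbot (xword m n)).1 a (mem_xword a)
    · intro b hb
      exact not_mem_xword b ((hbot (xword m n)).2.1 b hb)
  have htopy : top = yword m n := by
    apply eq_yword
    · intro b
      exact (htop (yword m n)).2.1 b (mem_yword b)
    · intro a ha
      exact not_mem_yword a ((htop (yword m n)).1 a ha)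
  -- bot is characterized by the delta condition of `star`
  have hdelta : ∀ w : ShuffleWord m n,
      (bot = w) ↔ ((∀ a : Fin m, Sum.inl a ∈ w.1) ∧ (∀ b : Fin n, Sum.inr b ∉ w.1)) := by
    intro w
    constructor
    · rintro rfl
      rw [hbotx]
      exact ⟨mem_xword, not_mem_xword⟩
    · rintro ⟨h1, h2⟩
      rw [hbotx, eq_xword w h1 h2]
  -- restated Möbius recursion
  have hmu' : ∀ b : ShuffleWord m n,
      (∑ c ∈ fset (fun c => ShuffleLE c b), mu bot c) = if bot = b then 1 else 0 := by
    intro b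
    rw [← hmu bot b (hbot b)]
    apply Finset.sum_congr
    · ext c
      rw [mem_fset, Finset.mem_filter]
      exact ⟨fun h => ⟨Finset.mem_univ c, hbot c, h⟩, fun h => h.2.2⟩
    · intros; rfl
  -- uniqueness by strong induction
  have key : ∀ (k : ℕ) (w : ShuffleWord m n),
      (fset (fun c => ShuffleLE c w)).card ≤ k → mu bot w = F w := by
    intro k
    induction k with
    | zero =>
      intro w hw
      exfalso
      have hmem : w ∈ fset (fun c => ShuffleLE c w) := mem_fset.2 (shuffleLE_refl w)
      have := Finset.card_pos.2 ⟨w, hmem⟩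
      omega
    | succ k ih =>
      intro w hw
      have hsum := hmu' w
      have hwmem : w ∈ fset (fun c => ShuffleLE c w) := mem_fset.2 (shuffleLE_refl w)
      rw [← Finset.add_sum_erase _ _ hwmem] at hsum
      have hrec : ∀ c ∈ (fset (fun c => ShuffleLE c w)).erase w, mu bot c = F c := by
        intro c hc
        rcases Finset.mem_erase.1 hc with ⟨hcne, hcmem⟩
        have hcw := mem_fset.1 hcmem
        apply ih
        have hsubset : fset (fun d => ShuffleLE d c) ⊆
            (fset (fun c => ShuffleLE c w)).erase w := by
          intro d hd
          have hdc := mem_fset.1 hd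
          rw [Finset.mem_erase]
          refine ⟨?_, mem_fset.2 (shuffleLE_trans hdc hcw)⟩
          rintro rfl
          exact hcne (shuffleLE_antisymm hcw hdc)
        have h1 := Finset.card_le_card hsubset
        have h2 : ((fset (fun c => ShuffleLE c w)).erase w).card
            = (fset (fun c => ShuffleLE c w)).card - 1 :=
          Finset.card_erase_of_mem hwmem
        omega
      rw [Finset.sum_congr (g := fun c => F c) rfl hrec] at hsum
      -- use star
      have hstar := star (m := m) (n := n) w
      rw [← Finset.add_sum_erase _ _ hwmem] at hstar
      have hd : (if bot = w then (1 : ℤ) else 0)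
          = @ite _ ((∀ a : Fin m, Sum.inl a ∈ w.1) ∧ (∀ b : Fin n, Sum.inr b ∉ w.1))
              (Classical.propDecidable _) (1 : ℤ) 0 := by
        rcases Classical.em (bot = w) with h | h
        · rw [if_pos h, if_pos ((hdelta w).1 h)]
        · rw [if_neg h, if_neg (fun hh => h ((hdelta w).2 hh))]
      rw [hd] at hsum
      omega
  have hmutop : mu bot top = F top := key _ top le_rfl
  -- compute F top
  have hset : fset (fun u => Fcond u top) = fset (fun u : ShuffleWord m n =>
      (∀ a : Fin m, Sum.inl a ∈ u.1) ∧ (∀ b : Fin n, Sum.inr b ∈ u.1)) := by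
    ext u
    rw [mem_fset, mem_fset]
    constructor
    · rintro ⟨_, hfull, hy⟩
      refine ⟨hfull, fun b => hy b ?_⟩
      rw [htopy]
      exact mem_yword b
    · rintro ⟨hfx, hfy⟩
      exact ⟨htop u, hfx, fun b _ => hfy b⟩
  rw [hmutop, F, hset, card_complete]
  rw [htopy, yword_rank]

end Main

end SP

open scoped Classical in
/-- The Möbius function of the shuffle poset satisfies
`μ(W_{m,n}) = μ(⊥,⊤) = (−1)^{m+n} binom(m+n,n)`.  Here `mu` is the Möbius function
of `W_{m,n}`, `bot` its bottom element `x` and `top` its top element `y`. -/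
theorem shuffleMoebius (m n : ℕ) [Fintype (ShuffleWord m n)]
    (mu : ShuffleWord m n → ShuffleWord m n → ℤ)
    (hmu : ∀ a b : ShuffleWord m n, ShuffleLE a b →
      (∑ c ∈ Finset.univ.filter (fun c => ShuffleLE a c ∧ ShuffleLE c b), mu a c) =
        if a = b then 1 else 0)
    (bot top : ShuffleWord m n)
    (hbot : ∀ w : ShuffleWord m n, ShuffleLE bot w)
    (htop : ∀ w : ShuffleWord m n, ShuffleLE w top) :
    mu bot top = (-1) ^ (m + n) * ((m + n).choose n : ℤ) := by
  exact SP.main_aux mu hmu bot top hbot htop
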